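/- arXiv:1412.5824 — 2 statements merged into one kernel-verified Lean document; each statement's English description precedes it below -/
import Mathlib

section
/- Let l > 0 and let Ā_l = {z ∈ ℂ : e^{-l} ≤ |z| ≤ 1}. Let α and β be two circle arcs contained in Ā_l with the same endpoints, one on each boundary circle: α(0) = β(0) with |α(0)| = e^{-l}, and α(1) = β(1) with |α(1)| = 1. Let φ_α and φ_β be argument lifts of α and β, and set Δα = φ_α(1) - φ_α(0), Δβ = φ_β(1) - φ_β(0). Then Δα - Δβ is an integer multiple of 2π, both Δα and Δβ lie in [-π, π], and consequently either Δα = Δβ, or {Δα, Δβ} = {π, -π}. (This encodes that two circle arcs with the same endpoints on the two boundary components are homotopic rel endpoints unless the endpoints form a singular pair, in which case the two arcs can represent exactly two distinct classes.) -/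
open Set

/-- The circle arc `t ↦ c + r·exp(i((1-t)θ₀ + tθ₁))`. -/
noncomputable def circleArc (c : ℂ) (r θ₀ θ₁ : ℝ) (t : ℝ) : ℂ :=
  c + (r : ℂ) * Complex.exp (Complex.I * (((1 - t) * θ₀ + t * θ₁ : ℝ) : ℂ))

/-- `φ` is a continuous argument lift of the path `γ` on `[0,1]`. -/
def IsArgLift (γ : ℝ → ℂ) (φ : ℝ → ℝ) : Prop :=
  ContinuousOn φ (Set.Icc 0 1) ∧
  ∀ t ∈ Set.Icc (0 : ℝ) 1,
    γ t = (‖γ t‖ : ℂ) * Complex.exp (Complex.I * (φ t : ℂ))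

lemma abs_exp_I_real (x : ℝ) : ‖Complex.exp (Complex.I * (x:ℂ))‖ = 1 := by
  rw [Complex.norm_exp]; simp

lemma intValued_const {f : ℝ → ℝ} (hf : ContinuousOn f (Set.Icc 0 1))
    (h : ∀ t ∈ Set.Icc (0:ℝ) 1, ∃ n : ℤ, f t = n) : f 1 = f 0 := by
  obtain ⟨n0, h0⟩ := h 0 (by simp)
  obtain ⟨n1, h1⟩ := h 1 (by simp)
  rcases lt_trichotomy n0 n1 with hlt | heq | hgt
  · exfalso
    have hy : (n0 : ℝ) + 1/2 ∈ Set.Icc (f 0) (f 1) := by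
      constructor
      · rw [h0]; linarith
      · rw [h1]
        have : (n0 : ℝ) + 1 ≤ n1 := by exact_mod_cast hlt
        linarith
    obtain ⟨t, ht, hft⟩ := intermediate_value_Icc (by norm_num : (0:ℝ) ≤ 1) hf hy
    obtain ⟨n, hn⟩ := h t ht
    rw [hn] at hft
    have : (2*n : ℝ) = 2*n0 + 1 := by linarith
    have : (2*n : ℤ) = 2*n0 + 1 := by exact_mod_cast this
    omega
  · rw [h0, h1, heq]
  · exfalso
    have hy : (n1 : ℝ) + 1/2 ∈ Set.Icc (f 1) (f 0) := by
      constructor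
      · rw [h1]; linarith
      · rw [h0]
        have : (n1 : ℝ) + 1 ≤ n0 := by exact_mod_cast hgt
        linarith
    obtain ⟨t, ht, hft⟩ := intermediate_value_Icc' (by norm_num : (0:ℝ) ≤ 1) hf hy
    obtain ⟨n, hn⟩ := h t ht
    rw [hn] at hft
    have : (2*n : ℝ) = 2*n1 + 1 := by linarith
    have : (2*n : ℤ) = 2*n1 + 1 := by exact_mod_cast this
    omega

lemma exp_eq_exp_int {a b : ℝ} (h : Complex.exp (Complex.I * a) = Complex.exp (Complex.I * b)) :
    ∃ n : ℤ, a - b = n * (2 * Real.pi) := by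
  obtain ⟨n, hn⟩ := Complex.exp_eq_exp_iff_exists_int.mp h
  refine ⟨n, ?_⟩
  have := congrArg Complex.im hn
  simp [Complex.mul_im] at this
  linarith [this]

lemma isArgLift_increment_eq {γ : ℝ → ℂ} {φ ψ : ℝ → ℝ}
    (hγ : ∀ t ∈ Set.Icc (0:ℝ) 1, γ t ≠ 0)
    (hφ : IsArgLift γ φ) (hψ : IsArgLift γ ψ) :
    φ 1 - φ 0 = ψ 1 - ψ 0 := by
  have key : ∀ t ∈ Set.Icc (0:ℝ) 1, ∃ n : ℤ, (φ t - ψ t) / (2 * Real.pi) = n := by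
    intro t ht
    have h1 := hφ.2 t ht
    have h2 := hψ.2 t ht
    have habs : (‖γ t‖ : ℂ) ≠ 0 := by
      simpa using (hγ t ht)
    have hexp : Complex.exp (Complex.I * (φ t : ℂ)) = Complex.exp (Complex.I * (ψ t : ℂ)) :=
      mul_left_cancel₀ habs (h1 ▸ h2 ▸ rfl)
    obtain ⟨n, hn⟩ := exp_eq_exp_int hexp
    exact ⟨n, by rw [hn]; field_simp⟩
  have hcont : ContinuousOn (fun t => (φ t - ψ t) / (2 * Real.pi)) (Set.Icc 0 1) :=
    (hφ.1.sub hψ.1).div_const _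
  have := intValued_const hcont key
  obtain ⟨n0, h0⟩ := key 0 (by simp)
  obtain ⟨n1, h1⟩ := key 1 (by simp)
  have hpi : (2 * Real.pi) ≠ 0 := by positivity
  field_simp at this
  linarith [this]

lemma pair_eq_polar (a b : ℝ) (ha : 0 < a) :
    (a : ℂ) + (b:ℂ) * Complex.I
      = (Real.sqrt (a^2+b^2) : ℂ) * Complex.exp (Complex.I * (Real.arctan (b/a) : ℂ)) := by
  have hab : (0:ℝ) < a^2 + b^2 := by positivity
  have hs : (0:ℝ) < Real.sqrt (a^2+b^2) := Real.sqrt_pos.mpr hab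
  have hkey : Real.sqrt (1 + (b/a)^2) = Real.sqrt (a^2+b^2) / a := by
    rw [show 1 + (b/a)^2 = (a^2+b^2)/a^2 by field_simp, Real.sqrt_div hab.le,
      Real.sqrt_sq ha.le]
  have hcos : Real.cos (Real.arctan (b/a)) = a / Real.sqrt (a^2+b^2) := by
    rw [Real.cos_arctan, hkey]; field_simp
  have hsin : Real.sin (Real.arctan (b/a)) = b / Real.sqrt (a^2+b^2) := by
    rw [Real.sin_arctan, hkey]; field_simp
  rw [mul_comm Complex.I, Complex.exp_mul_I, ← Complex.ofReal_cos, ← Complex.ofReal_sin,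
    hcos, hsin]
  have hs' : (Real.sqrt (a^2+b^2) : ℂ) ≠ 0 := by exact_mod_cast hs.ne'
  push_cast
  field_simp

lemma abs_circle_sq (c : ℂ) (hc : c ≠ 0) (r u : ℝ) :
    (‖c + (r:ℂ) * Complex.exp (Complex.I * (u:ℂ))‖)^2
      = ‖c‖^2 + r^2 + 2*r*(‖c‖)*Real.cos (u - Complex.arg c) := by
  have habs : ‖c‖ ≠ 0 := norm_ne_zero_iff.mpr hc
  set a := ‖c‖ with ha
  set χ := Complex.arg c with hχ
  have hre : c.re = a * Real.cos χ := by
    rw [Complex.cos_arg hc, ← ha]; field_simp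
  have him : c.im = a * Real.sin χ := by
    rw [Complex.sin_arg, ← ha]; field_simp
  have hzre : (c + (r:ℂ) * Complex.exp (Complex.I * (u:ℂ))).re
      = a * Real.cos χ + r * Real.cos u := by
    rw [mul_comm Complex.I]
    simp [Complex.add_re, Complex.mul_re, Complex.exp_ofReal_mul_I_re,
      Complex.exp_ofReal_mul_I_im, hre]
  have hzim : (c + (r:ℂ) * Complex.exp (Complex.I * (u:ℂ))).im
      = a * Real.sin χ + r * Real.sin u := by
    rw [mul_comm Complex.I]
    simp [Complex.add_im, Complex.mul_im, Complex.exp_ofReal_mul_I_re,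
      Complex.exp_ofReal_mul_I_im, him]
  rw [Complex.sq_norm, Complex.normSq_apply, hzre, hzim, Real.cos_sub]
  nlinarith [Real.sin_sq_add_cos_sq χ, Real.sin_sq_add_cos_sq u]

noncomputable def argFun (m χ u : ℝ) : ℝ :=
  u + Real.arctan ((-m * Real.sin (u - χ)) / (1 + m * Real.cos (u - χ)))

lemma argFun_int (m χ : ℝ) (k : ℤ) : argFun m χ (χ + k * Real.pi) = χ + k * Real.pi := by
  unfold argFun
  rw [show χ + (k:ℝ) * Real.pi - χ = k * Real.pi by ring, Real.sin_int_mul_pi]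
  simp

lemma argFun_hasDerivAt (m χ : ℝ) (hm0 : 0 ≤ m) (hm1 : m < 1) (u : ℝ) :
    HasDerivAt (argFun m χ)
      ((1 + m * Real.cos (u - χ)) / (1 + 2*m*Real.cos (u - χ) + m^2)) u := by
  have hden : (0:ℝ) < 1 + m * Real.cos (u - χ) := by
    nlinarith [Real.neg_one_le_cos (u - χ)]
  have hden2 : (0:ℝ) < 1 + 2*m*Real.cos (u - χ) + m^2 := by
    nlinarith [Real.neg_one_le_cos (u - χ)]
  have hid : HasDerivAt (fun u : ℝ => u - χ) 1 u := (hasDerivAt_id u).sub_const χ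
  have hsin : HasDerivAt (fun u : ℝ => Real.sin (u - χ)) (Real.cos (u - χ)) u := by
    simpa using hid.sin
  have hcos : HasDerivAt (fun u : ℝ => Real.cos (u - χ)) (-Real.sin (u - χ)) u := by
    simpa using hid.cos
  have hN : HasDerivAt (fun u : ℝ => -m * Real.sin (u - χ)) (-m * Real.cos (u - χ)) u :=
    hsin.const_mul (-m)
  have hD : HasDerivAt (fun u : ℝ => 1 + m * Real.cos (u - χ)) (-(m * Real.sin (u - χ))) u := by
    simpa using (hcos.const_mul m).const_add 1
  have hq : HasDerivAt (fun u : ℝ =>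
      (-m * Real.sin (u - χ)) / (1 + m * Real.cos (u - χ)))
      (((-m * Real.cos (u - χ)) * (1 + m * Real.cos (u - χ)) -
        (-m * Real.sin (u - χ)) * (-(m * Real.sin (u - χ)))) /
        (1 + m * Real.cos (u - χ))^2) u := hN.div hD hden.ne'
  have harc := (Real.hasDerivAt_arctan
      ((-m * Real.sin (u - χ)) / (1 + m * Real.cos (u - χ)))).comp u hq
  have := (hasDerivAt_id u).add harc
  convert this using 1
  · rfl
  · rfl
  · rfl
  set s := u - χ
  have hpyth := Real.sin_sq_add_cos_sq s
  have h1 : 1 + ((-m * Real.sin s) / (1 + m * Real.cos s))^2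
      = (1 + 2*m*Real.cos s + m^2) / (1 + m * Real.cos s)^2 := by
    field_simp
    nlinarith [hpyth]
  rw [h1]
  have hA := hden.ne'
  have hD2 := hden2.ne'
  field_simp
  have hD3 : (1 + m * Real.cos s * 2 + m ^ 2) ≠ 0 :=
    (by linarith : (0:ℝ) < 1 + m * Real.cos s * 2 + m ^ 2).ne'
  rw [div_eq_iff hD3, add_mul, div_mul_cancel₀ _ hD3]
  linear_combination (m^2) * hpyth

lemma argFun_strictMono (m χ : ℝ) (hm0 : 0 ≤ m) (hm1 : m < 1) : StrictMono (argFun m χ) := by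
  apply strictMono_of_deriv_pos
  intro u
  rw [(argFun_hasDerivAt m χ hm0 hm1 u).deriv]
  have h1 : (0:ℝ) < 1 + m * Real.cos (u - χ) := by nlinarith [Real.neg_one_le_cos (u - χ)]
  have h2 : (0:ℝ) < 1 + 2*m*Real.cos (u - χ) + m^2 := by nlinarith [Real.neg_one_le_cos (u - χ)]
  positivity

lemma argFun_continuous (m χ : ℝ) (hm0 : 0 ≤ m) (hm1 : m < 1) : Continuous (argFun m χ) := by
  have : ∀ u, DifferentiableAt ℝ (argFun m χ) u :=
    fun u => (argFun_hasDerivAt m χ hm0 hm1 u).differentiableAt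
  exact Differentiable.continuous (fun u => this u)

-- case r ≤ |c| : the outside lift
lemma case_outside (c : ℂ) (r θ₀ θ₁ : ℝ) (hr : 0 < r) (hcase : r ≤ ‖c‖)
    (hne : ∀ t ∈ Set.Icc (0:ℝ) 1, circleArc c r θ₀ θ₁ t ≠ 0) :
    ∃ L : ℝ → ℝ, IsArgLift (circleArc c r θ₀ θ₁) L ∧
      L 1 - L 0 ∈ Set.Icc (-Real.pi) Real.pi := by
  have hc : c ≠ 0 := by
    intro h; rw [h] at hcase; simp at hcase; linarith
  set θ : ℝ → ℝ := fun t => (1 - t) * θ₀ + t * θ₁ with hθdef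
  set v : ℝ → ℂ := fun t => 1 + ((r:ℂ)/c) * Complex.exp (Complex.I * (θ t : ℂ)) with hv
  have hγv : ∀ t, circleArc c r θ₀ θ₁ t = c * v t := by
    intro t
    unfold circleArc
    rw [hv]
    field_simp
    rfl
  have habsz : ∀ t, ‖((r:ℂ)/c) * Complex.exp (Complex.I * (θ t : ℂ))‖
      = r / ‖c‖ := by
    intro t
    rw [norm_mul, norm_div, abs_exp_I_real, Complex.norm_of_nonneg hr.le, mul_one]
  have hre : ∀ t, 0 ≤ (v t).re := by
    intro t
    have h1 : |(((r:ℂ)/c) * Complex.exp (Complex.I * (θ t : ℂ))).re| ≤ r / ‖c‖ := by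
      rw [← habsz t]; exact Complex.abs_re_le_norm _
    have h2 : r / ‖c‖ ≤ 1 := by
      rw [div_le_one (by linarith : (0:ℝ) < ‖c‖)]; exact hcase
    have := abs_le.mp h1
    simp only [hv, Complex.add_re, Complex.one_re]
    linarith [this.1]
  have hvne : ∀ t ∈ Set.Icc (0:ℝ) 1, v t ≠ 0 := by
    intro t ht h
    exact hne t ht (by rw [hγv t, h, mul_zero])
  have hvcont : Continuous v := by
    apply continuous_const.add
    apply continuous_const.mul
    apply Complex.continuous_exp.comp
    apply continuous_const.mul
    exact (Complex.continuous_ofReal.comp (by continuity))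
  refine ⟨fun t => Complex.arg c + Complex.arg (v t), ⟨?_, ?_⟩, ?_⟩
  · apply (continuousOn_const.add ?_)
    intro t ht
    apply (Complex.continuousAt_arg ?_).comp_continuousWithinAt hvcont.continuousWithinAt
    rw [Complex.mem_slitPlane_iff]
    rcases lt_or_eq_of_le (hre t) with h | h
    · exact Or.inl h
    · right
      intro him
      exact hvne t ht (by apply Complex.ext <;> simp [← h, him])
  · intro t ht
    have e1 := Complex.norm_mul_exp_arg_mul_I c
    have e2 := Complex.norm_mul_exp_arg_mul_I (v t)
    calc circleArc c r θ₀ θ₁ t = c * v t := hγv t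
      _ = ((‖c‖ : ℂ) * Complex.exp (Complex.arg c * Complex.I)) *
          ((‖v t‖ : ℂ) * Complex.exp (Complex.arg (v t) * Complex.I)) := by
        rw [e1, e2]
      _ = (‖circleArc c r θ₀ θ₁ t‖ : ℂ) *
          Complex.exp (Complex.I * ((Complex.arg c + Complex.arg (v t) : ℝ) : ℂ)) := by
        rw [hγv t, norm_mul]
        push_cast
        rw [show Complex.I * ((Complex.arg c : ℂ) + (Complex.arg (v t) : ℂ))
            = (Complex.arg c : ℂ) * Complex.I + (Complex.arg (v t) : ℂ) * Complex.I by ring,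
          Complex.exp_add]
        ring
  · have b1 : |Complex.arg (v 1)| ≤ Real.pi / 2 :=
      Complex.abs_arg_le_pi_div_two_iff.mpr (hre 1)
    have b0 : |Complex.arg (v 0)| ≤ Real.pi / 2 :=
      Complex.abs_arg_le_pi_div_two_iff.mpr (hre 0)
    have := abs_le.mp b1
    have := abs_le.mp b0
    constructor <;> [skip; skip] <;>
      · simp only []
        linarith [ (abs_le.mp b1).1, (abs_le.mp b1).2, (abs_le.mp b0).1, (abs_le.mp b0).2]

lemma circle_point_polar (c : ℂ) (hc : c ≠ 0) (r : ℝ) (hr : 0 < r)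
    (hcase : ‖c‖ < r) (u : ℝ) :
    c + (r:ℂ) * Complex.exp (Complex.I * (u:ℂ))
      = (‖c + (r:ℂ) * Complex.exp (Complex.I * (u:ℂ))‖ : ℂ)
        * Complex.exp (Complex.I * ((argFun (‖c‖ / r) (Complex.arg c) u : ℝ) : ℂ)) := by
  have hrC : (r:ℂ) ≠ 0 := by exact_mod_cast hr.ne'
  set a := ‖c‖ with hadef
  set χ := Complex.arg c with hχdef
  set m := a / r with hmdef
  have ha : 0 < a := norm_pos_iff.mpr hc
  have hm1 : m < 1 := (div_lt_one hr).mpr hcase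
  have hm0 : 0 ≤ m := div_nonneg ha.le hr.le
  obtain ⟨A, hAdef⟩ : ∃ A : ℝ, A = 1 + m * Real.cos (u - χ) := ⟨_, rfl⟩
  obtain ⟨B, hBdef⟩ : ∃ B : ℝ, B = -m * Real.sin (u - χ) := ⟨_, rfl⟩
  have hA : 0 < A := by
    rw [hAdef]; nlinarith [Real.neg_one_le_cos (u - χ)]
  have hW : (A:ℂ) + (B:ℂ) * Complex.I = 1 + (m:ℂ) * Complex.exp (Complex.I * ((χ - u : ℝ):ℂ)) := by
    rw [mul_comm Complex.I]
    apply Complex.ext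
    · simp only [Complex.add_re, Complex.ofReal_re, Complex.mul_re, Complex.I_re,
        Complex.I_im, Complex.ofReal_im, Complex.one_re,
        Complex.exp_ofReal_mul_I_re, Complex.exp_ofReal_mul_I_im]
      rw [hAdef, show χ - u = -(u - χ) by ring, Real.cos_neg]
      ring
    · simp only [Complex.add_im, Complex.ofReal_im, Complex.mul_im, Complex.I_re,
        Complex.I_im, Complex.ofReal_re, Complex.one_im,
        Complex.exp_ofReal_mul_I_re, Complex.exp_ofReal_mul_I_im]
      rw [hBdef, show χ - u = -(u - χ) by ring, Real.sin_neg]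
      ring
  have e3 : Complex.exp (Complex.I * (u:ℂ)) * Complex.exp (Complex.I * ((χ - u : ℝ):ℂ))
      = Complex.exp ((χ:ℂ) * Complex.I) := by
    rw [← Complex.exp_add]; congr 1; push_cast; ring
  have e4 : (r:ℂ) * (m:ℂ) = (a:ℂ) := by
    rw [hmdef]; push_cast; field_simp
  have hprod : c + (r:ℂ) * Complex.exp (Complex.I * (u:ℂ))
      = (r:ℂ) * Complex.exp (Complex.I * (u:ℂ)) * ((A:ℂ) + (B:ℂ) * Complex.I) := by
    rw [hW]
    have hcpol := Complex.norm_mul_exp_arg_mul_I c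
    rw [← hadef, ← hχdef] at hcpol
    calc c + (r:ℂ) * Complex.exp (Complex.I * (u:ℂ))
        = (r:ℂ) * Complex.exp (Complex.I * (u:ℂ))
          + ((r:ℂ)*(m:ℂ)) * (Complex.exp (Complex.I * (u:ℂ)) *
            Complex.exp (Complex.I * ((χ - u : ℝ):ℂ))) := by
          rw [e3, e4, hcpol]; ring
      _ = (r:ℂ) * Complex.exp (Complex.I * (u:ℂ)) *
          (1 + (m:ℂ) * Complex.exp (Complex.I * ((χ - u : ℝ):ℂ))) := by ring
  have habsW : ‖(A:ℂ) + (B:ℂ) * Complex.I‖ = Real.sqrt (A^2 + B^2) := by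
    rw [Complex.norm_def, Complex.normSq_apply]
    simp only [Complex.add_re, Complex.add_im, Complex.ofReal_re, Complex.ofReal_im,
      Complex.mul_re, Complex.mul_im, Complex.I_re, Complex.I_im]
    ring_nf
  have habsγ : ‖c + (r:ℂ) * Complex.exp (Complex.I * (u:ℂ))‖
      = r * Real.sqrt (A^2 + B^2) := by
    rw [hprod, norm_mul, norm_mul, Complex.norm_of_nonneg hr.le, abs_exp_I_real,
      habsW, mul_one]
  have hF : argFun m χ u = u + Real.arctan (B / A) := by
    rw [hAdef, hBdef]; rfl
  rw [habsγ, hF, hprod, pair_eq_polar A B hA, Complex.ofReal_add, mul_add, Complex.exp_add,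
    Complex.ofReal_mul]
  push_cast
  ring

set_option maxHeartbeats 2000000 in
lemma case_inside (l : ℝ) (hl : 0 < l) (c : ℂ) (r θ₀ θ₁ : ℝ) (hr : 0 < r)
    (hcase : ‖c‖ < r) (hθ : |θ₁ - θ₀| ≤ 2 * Real.pi)
    (hmem : ∀ t ∈ Set.Icc (0:ℝ) 1,
      Real.exp (-l) ≤ ‖circleArc c r θ₀ θ₁ t‖ ∧
      ‖circleArc c r θ₀ θ₁ t‖ ≤ 1)
    (h0 : ‖circleArc c r θ₀ θ₁ 0‖ = Real.exp (-l))
    (h1 : ‖circleArc c r θ₀ θ₁ 1‖ = 1) :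
    ∃ L : ℝ → ℝ, IsArgLift (circleArc c r θ₀ θ₁) L ∧
      L 1 - L 0 ∈ Set.Icc (-Real.pi) Real.pi := by
  have hπ := Real.pi_pos
  have hexp1 : Real.exp (-l) < 1 := by
    rw [← Real.exp_zero]; exact Real.exp_lt_exp.mpr (by linarith)
  have hc : c ≠ 0 := by
    intro h
    have e0 : ‖circleArc c r θ₀ θ₁ 0‖ = r := by
      unfold circleArc
      rw [h, zero_add, norm_mul, Complex.norm_of_nonneg hr.le, abs_exp_I_real, mul_one]
    have e1 : ‖circleArc c r θ₀ θ₁ 1‖ = r := by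
      unfold circleArc
      rw [h, zero_add, norm_mul, Complex.norm_of_nonneg hr.le, abs_exp_I_real, mul_one]
    rw [e0] at h0; rw [e1] at h1
    linarith
  set a := ‖c‖ with hadef
  set χ := Complex.arg c with hχdef
  set m := a / r with hmdef
  have ha : 0 < a := norm_pos_iff.mpr hc
  have hm1 : m < 1 := (div_lt_one hr).mpr hcase
  have hm0 : 0 ≤ m := div_nonneg ha.le hr.le
  set F : ℝ → ℝ := argFun m χ with hFdef
  have hmono : StrictMono F := argFun_strictMono m χ hm0 hm1
  have hkey : ∀ u : ℝ, c + (r:ℂ) * Complex.exp (Complex.I * (u:ℂ))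
      = (‖c + (r:ℂ) * Complex.exp (Complex.I * (u:ℂ))‖ : ℂ)
        * Complex.exp (Complex.I * ((F u : ℝ) : ℂ)) :=
    circle_point_polar c hc r hr hcase
  have hLlift : IsArgLift (circleArc c r θ₀ θ₁) (fun t => F ((1 - t) * θ₀ + t * θ₁)) := by
    constructor
    · exact ((argFun_continuous m χ hm0 hm1).comp (by continuity)).continuousOn
    · intro t _
      exact hkey ((1 - t) * θ₀ + t * θ₁)
  refine ⟨fun t => F ((1 - t) * θ₀ + t * θ₁), hLlift, ?_⟩
  have hθ1 : (1 - (1:ℝ)) * θ₀ + 1 * θ₁ = θ₁ := by ring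
  have hθ0 : (1 - (0:ℝ)) * θ₀ + 0 * θ₁ = θ₀ := by ring
  simp only [hθ1, hθ0]
  have harc : ∀ t : ℝ, circleArc c r θ₀ θ₁ t
      = c + (r:ℂ) * Complex.exp (Complex.I * (((1 - t) * θ₀ + t * θ₁ : ℝ) : ℂ)) := fun t => rfl
  have hsq : ∀ u : ℝ, (‖c + (r:ℂ) * Complex.exp (Complex.I * (u:ℂ))‖)^2
      = a^2 + r^2 + 2*r*a*Real.cos (u - χ) := by
    intro u
    rw [hadef, hχdef]
    exact abs_circle_sq c hc r u
  have e1 : circleArc c r θ₀ θ₁ 1 = c + (r:ℂ) * Complex.exp (Complex.I * ((θ₁:ℝ):ℂ)) := by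
    rw [harc 1, hθ1]
  have e0 : circleArc c r θ₀ θ₁ 0 = c + (r:ℂ) * Complex.exp (Complex.I * ((θ₀:ℝ):ℂ)) := by
    rw [harc 0, hθ0]
  have hsq1 : (1:ℝ) = a^2 + r^2 + 2*r*a*Real.cos (θ₁ - χ) := by
    have h' := hsq θ₁
    rw [← e1, h1, one_pow] at h'
    exact h'
  have hsq0 : (Real.exp (-l))^2 = a^2 + r^2 + 2*r*a*Real.cos (θ₀ - χ) := by
    have h' := hsq θ₀
    rw [← e0, h0] at h'
    exact h'
  have hra : (0:ℝ) < 2*r*a := by positivity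
  have hc1 : ∀ t ∈ Set.Icc (0:ℝ) 1,
      Real.cos (((1 - t) * θ₀ + t * θ₁) - χ) ≤ Real.cos (θ₁ - χ) := by
    intro t ht
    have hub := (hmem t ht).2
    have habsnn : 0 ≤ ‖circleArc c r θ₀ θ₁ t‖ := norm_nonneg _
    have hsq' : (‖circleArc c r θ₀ θ₁ t‖)^2 ≤ 1 := by nlinarith
    rw [harc t, hsq ((1 - t) * θ₀ + t * θ₁)] at hsq'
    exact le_of_mul_le_mul_left (by linarith [hsq1]) hra
  have hc0 : ∀ t ∈ Set.Icc (0:ℝ) 1,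
      Real.cos (θ₀ - χ) ≤ Real.cos (((1 - t) * θ₀ + t * θ₁) - χ) := by
    intro t ht
    have hlb := (hmem t ht).1
    have hexpnn : (0:ℝ) ≤ Real.exp (-l) := (Real.exp_pos _).le
    have hsq' : (Real.exp (-l))^2 ≤ (‖circleArc c r θ₀ θ₁ t‖)^2 := by nlinarith
    rw [harc t, hsq ((1 - t) * θ₀ + t * θ₁)] at hsq'
    exact le_of_mul_le_mul_left (by linarith [hsq0]) hra
  have hab1 : θ₁ - θ₀ ≤ 2*Real.pi := le_trans (le_abs_self _) hθ
  have hab2 : θ₀ - θ₁ ≤ 2*Real.pi := by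
    have := neg_abs_le (θ₁ - θ₀); linarith
  constructor
  -- lower bound : -π ≤ F θ₁ - F θ₀
  · by_contra h'
    push_neg at h'
    obtain ⟨k, hk⟩ : ∃ k : ℤ, k = ⌈(θ₀ - χ)/Real.pi⌉ := ⟨_, rfl⟩
    have hk1 : θ₀ ≤ χ + (k:ℝ)*Real.pi := by
      have h2 := Int.le_ceil ((θ₀ - χ)/Real.pi)
      rw [← hk] at h2
      rw [div_le_iff₀ hπ] at h2
      linarith
    have hk2 : χ + ((k:ℝ)-1)*Real.pi < θ₀ := by
      have h2 := Int.ceil_lt_add_one ((θ₀ - χ)/Real.pi)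
      rw [← hk] at h2
      have h3 : ((k:ℝ) - 1) < (θ₀ - χ)/Real.pi := by linarith
      rw [lt_div_iff₀ hπ] at h3
      linarith
    obtain ⟨v, hvdef⟩ : ∃ v : ℝ, v = χ + ((k:ℝ)-1)*Real.pi := ⟨_, rfl⟩
    have hFv : F v = v := by
      have h2 := argFun_int m χ (k-1)
      push_cast at h2
      rw [hvdef]
      exact h2
    have hFθ₀ : F θ₀ ≤ χ + (k:ℝ)*Real.pi := by
      have h5 := hmono.monotone hk1
      have h6 : F (χ + (k:ℝ)*Real.pi) = χ + (k:ℝ)*Real.pi := by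
        have := argFun_int m χ k
        exact this
      linarith
    have hFv' : F θ₁ < F v := by
      rw [hFv, hvdef]; linarith
    have hv1 : θ₁ < v := hmono.lt_iff_lt.mp hFv'
    have hv0 : v < θ₀ := by rw [hvdef]; exact hk2
    have hd : 0 < θ₀ - θ₁ := by linarith
    obtain ⟨t', ht'def⟩ : ∃ x : ℝ, x = (θ₀ - v)/(θ₀ - θ₁) := ⟨_, rfl⟩
    have ht' : t' ∈ Set.Icc (0:ℝ) 1 := by
      rw [ht'def]
      exact ⟨div_nonneg (by linarith) (by linarith), (div_le_one hd).mpr (by linarith)⟩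
    have hline : (1 - t') * θ₀ + t' * θ₁ = v := by
      rw [ht'def]; field_simp; ring
    rcases Int.even_or_odd (k-1) with ⟨j, hj⟩ | ⟨j, hj⟩
    · have hjr : ((k:ℝ)-1) = 2*(j:ℝ) := by
        have h12 : ((k:ℝ)-1) = (j:ℝ) + (j:ℝ) := by exact_mod_cast hj
        linarith
      have hcv : Real.cos (v - χ) = 1 := by
        rw [hvdef, show χ + ((k:ℝ)-1)*Real.pi - χ = ((k:ℝ)-1)*Real.pi by ring, hjr,
          show 2*(j:ℝ)*Real.pi = (j:ℝ)*(2*Real.pi) by ring]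
        exact Real.cos_int_mul_two_pi j
      have h9 := hc1 t' ht'
      rw [hline, hcv] at h9
      have h10 : Real.cos (θ₁ - χ) = 1 := le_antisymm (Real.cos_le_one _) h9
      obtain ⟨n, hn⟩ := (Real.cos_eq_one_iff _).mp h10
      have hvχ : v - χ = (j:ℝ)*(2*Real.pi) := by
        rw [hvdef, show χ + ((k:ℝ)-1)*Real.pi - χ = ((k:ℝ)-1)*Real.pi by ring, hjr]; ring
      have hnj : (n:ℝ)*(2*Real.pi) < (j:ℝ)*(2*Real.pi) := by
        rw [hn, ← hvχ]; linarith
      have hnj2 : (n:ℤ) < j := by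
        have := (mul_lt_mul_iff_left₀ (by positivity : (0:ℝ) < 2*Real.pi)).mp hnj
        exact_mod_cast this
      have hnj3 : (n:ℝ) + 1 ≤ (j:ℝ) := by exact_mod_cast hnj2
      have he : v - θ₁ = ((j:ℝ) - n) * (2*Real.pi) := by
        rw [show v - θ₁ = (v - χ) - (θ₁ - χ) by ring, hvχ, ← hn]; ring
      have hge : 2*Real.pi ≤ v - θ₁ := by
        rw [he]
        have h13 : (1:ℝ) ≤ ((j:ℝ) - n) := by linarith
        nlinarith [hπ, h13]
      linarith [hab2]
    · have hjr : ((k:ℝ)-1) = 2*(j:ℝ)+1 := by exact_mod_cast hj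
      have hcv : Real.cos (v - χ) = -1 := by
        apply Real.cos_eq_neg_one_iff.mpr
        refine ⟨j, ?_⟩
        rw [hvdef, show χ + ((k:ℝ)-1)*Real.pi - χ = ((k:ℝ)-1)*Real.pi by ring, hjr]; ring
      have h9 := hc0 t' ht'
      rw [hline, hcv] at h9
      have h10 : Real.cos (θ₀ - χ) = -1 := le_antisymm h9 (Real.neg_one_le_cos _)
      obtain ⟨n, hn⟩ := Real.cos_eq_neg_one_iff.mp h10
      have hvχ : v - χ = Real.pi + (j:ℝ)*(2*Real.pi) := by
        rw [hvdef, show χ + ((k:ℝ)-1)*Real.pi - χ = ((k:ℝ)-1)*Real.pi by ring, hjr]; ring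
      have hnj : (j:ℝ)*(2*Real.pi) < (n:ℝ)*(2*Real.pi) := by
        have h11 : Real.pi + (j:ℝ)*(2*Real.pi) < Real.pi + (n:ℝ)*(2*Real.pi) := by
          rw [hn, ← hvχ]; linarith
        linarith
      have hnj2 : (j:ℤ) < n := by
        have := (mul_lt_mul_iff_left₀ (by positivity : (0:ℝ) < 2*Real.pi)).mp hnj
        exact_mod_cast this
      have hnj3 : (j:ℝ) + 1 ≤ (n:ℝ) := by exact_mod_cast hnj2
      have he : θ₀ - v = ((n:ℝ) - j) * (2*Real.pi) := by
        rw [show θ₀ - v = (θ₀ - χ) - (v - χ) by ring, ← hn, hvχ]; ring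
      have hge : 2*Real.pi ≤ θ₀ - v := by
        rw [he]
        have h13 : (1:ℝ) ≤ ((n:ℝ) - j) := by linarith
        nlinarith [hπ, h13]
      linarith [hab2]
  -- upper bound : F θ₁ - F θ₀ ≤ π
  · by_contra h'
    push_neg at h'
    obtain ⟨k, hk⟩ : ∃ k : ℤ, k = ⌊(θ₀ - χ)/Real.pi⌋ := ⟨_, rfl⟩
    have hk1 : χ + (k:ℝ)*Real.pi ≤ θ₀ := by
      have h2 := Int.floor_le ((θ₀ - χ)/Real.pi)
      rw [← hk] at h2
      rw [le_div_iff₀ hπ] at h2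
      linarith
    have hk2 : θ₀ < χ + ((k:ℝ)+1)*Real.pi := by
      have h2 := Int.lt_floor_add_one ((θ₀ - χ)/Real.pi)
      rw [← hk] at h2
      have h3 : (θ₀ - χ)/Real.pi < ((k:ℝ) + 1) := by linarith
      rw [div_lt_iff₀ hπ] at h3
      linarith
    obtain ⟨v, hvdef⟩ : ∃ v : ℝ, v = χ + ((k:ℝ)+1)*Real.pi := ⟨_, rfl⟩
    have hFv : F v = v := by
      have h2 := argFun_int m χ (k+1)
      push_cast at h2
      rw [hvdef]
      exact h2
    have hFθ₀ : χ + (k:ℝ)*Real.pi ≤ F θ₀ := by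
      have h5 := hmono.monotone hk1
      have h6 : F (χ + (k:ℝ)*Real.pi) = χ + (k:ℝ)*Real.pi := argFun_int m χ k
      linarith
    have hFv' : F v < F θ₁ := by
      rw [hFv, hvdef]; linarith
    have hv1 : v < θ₁ := hmono.lt_iff_lt.mp hFv'
    have hv0 : θ₀ < v := by rw [hvdef]; exact hk2
    have hd : 0 < θ₁ - θ₀ := by linarith
    obtain ⟨t', ht'def⟩ : ∃ x : ℝ, x = (v - θ₀)/(θ₁ - θ₀) := ⟨_, rfl⟩
    have ht' : t' ∈ Set.Icc (0:ℝ) 1 := by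
      rw [ht'def]
      exact ⟨div_nonneg (by linarith) (by linarith), (div_le_one hd).mpr (by linarith)⟩
    have hline : (1 - t') * θ₀ + t' * θ₁ = v := by
      rw [ht'def]; field_simp; ring
    rcases Int.even_or_odd (k+1) with ⟨j, hj⟩ | ⟨j, hj⟩
    · have hjr : ((k:ℝ)+1) = 2*(j:ℝ) := by
        have h12 : ((k:ℝ)+1) = (j:ℝ) + (j:ℝ) := by exact_mod_cast hj
        linarith
      have hcv : Real.cos (v - χ) = 1 := by
        rw [hvdef, show χ + ((k:ℝ)+1)*Real.pi - χ = ((k:ℝ)+1)*Real.pi by ring, hjr,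
          show 2*(j:ℝ)*Real.pi = (j:ℝ)*(2*Real.pi) by ring]
        exact Real.cos_int_mul_two_pi j
      have h9 := hc1 t' ht'
      rw [hline, hcv] at h9
      have h10 : Real.cos (θ₁ - χ) = 1 := le_antisymm (Real.cos_le_one _) h9
      obtain ⟨n, hn⟩ := (Real.cos_eq_one_iff _).mp h10
      have hvχ : v - χ = (j:ℝ)*(2*Real.pi) := by
        rw [hvdef, show χ + ((k:ℝ)+1)*Real.pi - χ = ((k:ℝ)+1)*Real.pi by ring, hjr]; ring
      have hnj : (j:ℝ)*(2*Real.pi) < (n:ℝ)*(2*Real.pi) := by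
        rw [hn, ← hvχ]; linarith
      have hnj2 : (j:ℤ) < n := by
        have := (mul_lt_mul_iff_left₀ (by positivity : (0:ℝ) < 2*Real.pi)).mp hnj
        exact_mod_cast this
      have hnj3 : (j:ℝ) + 1 ≤ (n:ℝ) := by exact_mod_cast hnj2
      have he : θ₁ - v = ((n:ℝ) - j) * (2*Real.pi) := by
        rw [show θ₁ - v = (θ₁ - χ) - (v - χ) by ring, ← hn, hvχ]; ring
      have hge : 2*Real.pi ≤ θ₁ - v := by
        rw [he]
        have h13 : (1:ℝ) ≤ ((n:ℝ) - j) := by linarith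
        nlinarith [hπ, h13]
      linarith [hab1]
    · have hjr : ((k:ℝ)+1) = 2*(j:ℝ)+1 := by exact_mod_cast hj
      have hcv : Real.cos (v - χ) = -1 := by
        apply Real.cos_eq_neg_one_iff.mpr
        refine ⟨j, ?_⟩
        rw [hvdef, show χ + ((k:ℝ)+1)*Real.pi - χ = ((k:ℝ)+1)*Real.pi by ring, hjr]; ring
      have h9 := hc0 t' ht'
      rw [hline, hcv] at h9
      have h10 : Real.cos (θ₀ - χ) = -1 := le_antisymm h9 (Real.neg_one_le_cos _)
      obtain ⟨n, hn⟩ := Real.cos_eq_neg_one_iff.mp h10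
      have hvχ : v - χ = Real.pi + (j:ℝ)*(2*Real.pi) := by
        rw [hvdef, show χ + ((k:ℝ)+1)*Real.pi - χ = ((k:ℝ)+1)*Real.pi by ring, hjr]; ring
      have hnj : (n:ℝ)*(2*Real.pi) < (j:ℝ)*(2*Real.pi) := by
        have h11 : Real.pi + (n:ℝ)*(2*Real.pi) < Real.pi + (j:ℝ)*(2*Real.pi) := by
          rw [hn, ← hvχ]; linarith
        linarith
      have hnj2 : (n:ℤ) < j := by
        have := (mul_lt_mul_iff_left₀ (by positivity : (0:ℝ) < 2*Real.pi)).mp hnj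
        exact_mod_cast this
      have hnj3 : (n:ℝ) + 1 ≤ (j:ℝ) := by exact_mod_cast hnj2
      have he : v - θ₀ = ((j:ℝ) - n) * (2*Real.pi) := by
        rw [show v - θ₀ = (v - χ) - (θ₀ - χ) by ring, ← hn, hvχ]; ring
      have hge : 2*Real.pi ≤ v - θ₀ := by
        rw [he]
        have h13 : (1:ℝ) ≤ ((j:ℝ) - n) := by linarith
        nlinarith [hπ, h13]
      linarith [hab1]

lemma arc_increment_mem (l : ℝ) (hl : 0 < l) (c : ℂ) (r θ₀ θ₁ : ℝ) (hr : 0 < r)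
    (hθ : |θ₁ - θ₀| ≤ 2 * Real.pi)
    (hmem : ∀ t ∈ Set.Icc (0:ℝ) 1,
      Real.exp (-l) ≤ ‖circleArc c r θ₀ θ₁ t‖ ∧
      ‖circleArc c r θ₀ θ₁ t‖ ≤ 1)
    (h0 : ‖circleArc c r θ₀ θ₁ 0‖ = Real.exp (-l))
    (h1 : ‖circleArc c r θ₀ θ₁ 1‖ = 1)
    (φ : ℝ → ℝ) (hφ : IsArgLift (circleArc c r θ₀ θ₁) φ) :
    φ 1 - φ 0 ∈ Set.Icc (-Real.pi) Real.pi := by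
  have hne : ∀ t ∈ Set.Icc (0:ℝ) 1, circleArc c r θ₀ θ₁ t ≠ 0 := by
    intro t ht h
    have := (hmem t ht).1
    rw [h] at this
    simp at this
    linarith [Real.exp_pos (-l), this]
  obtain ⟨L, hL, hLmem⟩ :
      ∃ L : ℝ → ℝ, IsArgLift (circleArc c r θ₀ θ₁) L ∧
        L 1 - L 0 ∈ Set.Icc (-Real.pi) Real.pi := by
    rcases lt_or_ge (‖c‖) r with hcase | hcase
    · exact case_inside l hl c r θ₀ θ₁ hr hcase hθ hmem h0 h1
    · exact case_outside c r θ₀ θ₁ hr hcase hne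
  rw [isArgLift_increment_eq hne hφ hL]
  exact hLmem


/-- Two circle arcs in the closed annulus `{e^{-l} ≤ |z| ≤ 1}` with the same
endpoints, one on each boundary circle, have argument increments differing by a
multiple of `2π`, each lying in `[-π, π]`; hence the increments are equal or
form the pair `{π, -π}`. -/
theorem circleArcs_same_endpoints (l : ℝ) (hl : 0 < l)
    (cα : ℂ) (rα θα₀ θα₁ : ℝ) (hrα : 0 < rα) (hθα : |θα₁ - θα₀| ≤ 2 * Real.pi)
    (cβ : ℂ) (rβ θβ₀ θβ₁ : ℝ) (hrβ : 0 < rβ) (hθβ : |θβ₁ - θβ₀| ≤ 2 * Real.pi)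
    (hmemα : ∀ t ∈ Set.Icc (0 : ℝ) 1,
      Real.exp (-l) ≤ ‖circleArc cα rα θα₀ θα₁ t‖ ∧
      ‖circleArc cα rα θα₀ θα₁ t‖ ≤ 1)
    (hmemβ : ∀ t ∈ Set.Icc (0 : ℝ) 1,
      Real.exp (-l) ≤ ‖circleArc cβ rβ θβ₀ θβ₁ t‖ ∧
      ‖circleArc cβ rβ θβ₀ θβ₁ t‖ ≤ 1)
    (hsame0 : circleArc cα rα θα₀ θα₁ 0 = circleArc cβ rβ θβ₀ θβ₁ 0)
    (hsame1 : circleArc cα rα θα₀ θα₁ 1 = circleArc cβ rβ θβ₀ θβ₁ 1)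
    (h0 : ‖circleArc cα rα θα₀ θα₁ 0‖ = Real.exp (-l))
    (h1 : ‖circleArc cα rα θα₀ θα₁ 1‖ = 1)
    (φα φβ : ℝ → ℝ)
    (hφα : IsArgLift (circleArc cα rα θα₀ θα₁) φα)
    (hφβ : IsArgLift (circleArc cβ rβ θβ₀ θβ₁) φβ) :
    (∃ n : ℤ, (φα 1 - φα 0) - (φβ 1 - φβ 0) = n * (2 * Real.pi)) ∧
    (φα 1 - φα 0) ∈ Set.Icc (-Real.pi) Real.pi ∧
    (φβ 1 - φβ 0) ∈ Set.Icc (-Real.pi) Real.pi ∧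
    (φα 1 - φα 0 = φβ 1 - φβ 0 ∨
      (φα 1 - φα 0 = Real.pi ∧ φβ 1 - φβ 0 = -Real.pi) ∨
      (φα 1 - φα 0 = -Real.pi ∧ φβ 1 - φβ 0 = Real.pi)) := by
  have hπ := Real.pi_pos
  have h0β : ‖circleArc cβ rβ θβ₀ θβ₁ 0‖ = Real.exp (-l) := by
    rw [← hsame0]; exact h0
  have h1β : ‖circleArc cβ rβ θβ₀ θβ₁ 1‖ = 1 := by
    rw [← hsame1]; exact h1
  have hIα : φα 1 - φα 0 ∈ Set.Icc (-Real.pi) Real.pi :=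
    arc_increment_mem l hl cα rα θα₀ θα₁ hrα hθα hmemα h0 h1 φα hφα
  have hIβ : φβ 1 - φβ 0 ∈ Set.Icc (-Real.pi) Real.pi :=
    arc_increment_mem l hl cβ rβ θβ₀ θβ₁ hrβ hθβ hmemβ h0β h1β φβ hφβ
  -- integer difference
  have hint : ∃ n : ℤ, (φα 1 - φα 0) - (φβ 1 - φβ 0) = n * (2 * Real.pi) := by
    have hne0 : circleArc cα rα θα₀ θα₁ 0 ≠ 0 := by
      intro h
      rw [h] at h0
      simp at h0
      linarith [Real.exp_pos (-l), h0]
    have hne1 : circleArc cα rα θα₀ θα₁ 1 ≠ 0 := by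
      intro h
      rw [h] at h1
      simp at h1
    have lift_diff : ∀ (t : ℝ), t ∈ Set.Icc (0:ℝ) 1 →
        circleArc cα rα θα₀ θα₁ t = circleArc cβ rβ θβ₀ θβ₁ t →
        circleArc cα rα θα₀ θα₁ t ≠ 0 →
        ∃ n : ℤ, φα t - φβ t = n * (2 * Real.pi) := by
      intro t ht hsame hnet
      have hα := hφα.2 t ht
      have hβ := hφβ.2 t ht
      rw [hsame] at hα
      have habs : (‖circleArc cβ rβ θβ₀ θβ₁ t‖ : ℂ) ≠ 0 := by
        have : circleArc cβ rβ θβ₀ θβ₁ t ≠ 0 := hsame ▸ hnet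
        simpa using this
      have hexp : Complex.exp (Complex.I * ((φα t : ℝ) : ℂ))
          = Complex.exp (Complex.I * ((φβ t : ℝ) : ℂ)) :=
        mul_left_cancel₀ habs (hα.symm.trans hβ)
      exact exp_eq_exp_int hexp
    obtain ⟨n₀, hn₀⟩ := lift_diff 0 (by norm_num) hsame0 hne0
    obtain ⟨n₁, hn₁⟩ := lift_diff 1 (by norm_num) hsame1 hne1
    refine ⟨n₁ - n₀, ?_⟩
    have hc : ((n₁ - n₀ : ℤ):ℝ) * (2*Real.pi)
        = (n₁:ℝ)*(2*Real.pi) - (n₀:ℝ)*(2*Real.pi) := by push_cast; ring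
    rw [hc]
    linarith
  obtain ⟨n, hn⟩ := hint
  refine ⟨⟨n, hn⟩, hIα, hIβ, ?_⟩
  obtain ⟨ha1, ha2⟩ := hIα
  obtain ⟨hb1, hb2⟩ := hIβ
  have hn1 : (n:ℝ) * (2*Real.pi) ≤ 2*Real.pi := by linarith
  have hn2 : -(2*Real.pi) ≤ (n:ℝ) * (2*Real.pi) := by linarith
  have hn1' : (n:ℤ) ≤ 1 := by
    by_contra hcon
    push_neg at hcon
    have h2 : (2:ℝ) ≤ (n:ℝ) := by exact_mod_cast hcon
    have := mul_le_mul_of_nonneg_right h2 (by positivity : (0:ℝ) ≤ 2*Real.pi)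
    linarith
  have hn2' : (-1:ℤ) ≤ n := by
    by_contra hcon
    push_neg at hcon
    have h2' : n ≤ -2 := by omega
    have h2 : (n:ℝ) ≤ -2 := by exact_mod_cast h2'
    have := mul_le_mul_of_nonneg_right h2 (by positivity : (0:ℝ) ≤ 2*Real.pi)
    linarith
  interval_cases n
  · push_cast at hn
    right; right
    constructor <;> linarith
  · push_cast at hn
    left
    linarith
  · push_cast at hn
    right; left
    constructor <;> linarith
end

section
/- Let l > 0 and let Ā_l = {z ∈ ℂ : e^{-l} ≤ |z| ≤ 1}. Let γ be a circle arc contained in Ā_l with |γ(0)| = e^{-l} and |γ(1)| = 1, and let φ be an argument lift of γ. If |φ(1) - φ(0)| = π (i.e. the winding number of γ attains the extremal value ±1/2), then γ is half of a circle enclosing 0 joining the point of minimal modulus to the point of maximal modulus on that circle, and in particular the endpoints form a singular pair: γ(1) = -e^{l}·γ(0). -/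
open Real Set Topology

lemma endpoint_min (x Δ : ℝ)
    (h : ∀ t ∈ Set.Icc (0:ℝ) 1, Real.cos x ≤ Real.cos (x + t * Δ)) :
    Real.sin x * Δ ≤ 0 := by
  set g : ℝ → ℝ := fun t => Real.cos (x + t * Δ) with hg
  have hlin : HasDerivAt (fun t : ℝ => x + t * Δ) Δ 0 := by
    simpa using ((hasDerivAt_id (0:ℝ)).mul_const Δ).const_add x
  have hd : HasDerivAt g (-Real.sin x * Δ) 0 := by
    have := (Real.hasDerivAt_cos (x + 0 * Δ)).comp 0 hlin
    rw [zero_mul, add_zero] at this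
    exact this
  have hd' : HasDerivWithinAt g (-Real.sin x * Δ) (Set.Ioc (0:ℝ) 1) 0 :=
    hd.hasDerivWithinAt
  rw [hasDerivWithinAt_iff_tendsto_slope] at hd'
  have hset : (Set.Ioc (0:ℝ) 1) \ {0} = Set.Ioc (0:ℝ) 1 := by
    apply Set.diff_singleton_eq_self; simp
  rw [hset] at hd'
  have hnb : (𝓝[Set.Ioc (0:ℝ) 1] (0:ℝ)).NeBot := left_nhdsWithin_Ioc_neBot (by norm_num)
  have hev : ∀ᶠ t in 𝓝[Set.Ioc (0:ℝ) 1] (0:ℝ), 0 ≤ slope g 0 t := by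
    filter_upwards [self_mem_nhdsWithin] with t ht
    have ht0 : 0 < t := ht.1
    have hgt : g 0 ≤ g t := by
      have := h t ⟨le_of_lt ht0, ht.2⟩
      simpa [hg] using this
    have : slope g 0 t = (g t - g 0) / t := by
      simp [slope_def_field]
    rw [this]
    apply div_nonneg (by linarith) (le_of_lt ht0)
  have := ge_of_tendsto hd' hev
  linarith

lemma endpoint_max (x Δ : ℝ)
    (h : ∀ t ∈ Set.Icc (0:ℝ) 1, Real.cos (x + t * Δ) ≤ Real.cos x) :
    0 ≤ Real.sin x * Δ := by
  have h' : ∀ t ∈ Set.Icc (0:ℝ) 1,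
      Real.cos (Real.pi - x) ≤ Real.cos ((Real.pi - x) + t * (-Δ)) := by
    intro t ht
    have h1 : Real.cos (Real.pi - x) = -Real.cos x := by
      rw [Real.cos_pi_sub]
    have h2 : Real.cos ((Real.pi - x) + t * (-Δ)) = -Real.cos (x + t * Δ) := by
      have : (Real.pi - x) + t * (-Δ) = Real.pi - (x + t * Δ) := by ring
      rw [this, Real.cos_pi_sub]
    rw [h1, h2]
    linarith [h t ht]
  have := endpoint_min (Real.pi - x) (-Δ) h'
  rw [Real.sin_pi_sub] at this
  linarith


set_option maxHeartbeats 1000000 in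
/-- If a circle arc in the closed annulus `{e^{-l} ≤ |z| ≤ 1}` joining the two
boundary circles has extremal winding (`|φ(1) - φ(0)| = π`), then it is half of
a circle enclosing `0` and its endpoints form a singular pair:
`γ(1) = -e^l·γ(0)`. -/
theorem extremal_winding_singularPair (l : ℝ) (hl : 0 < l)
    (c : ℂ) (r θ₀ θ₁ : ℝ) (hr : 0 < r) (hθ : |θ₁ - θ₀| ≤ 2 * Real.pi)
    (hmem : ∀ t ∈ Set.Icc (0 : ℝ) 1,
      Real.exp (-l) ≤ ‖circleArc c r θ₀ θ₁ t‖ ∧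
      ‖circleArc c r θ₀ θ₁ t‖ ≤ 1)
    (h0 : ‖circleArc c r θ₀ θ₁ 0‖ = Real.exp (-l))
    (h1 : ‖circleArc c r θ₀ θ₁ 1‖ = 1)
    (φ : ℝ → ℝ) (hφ : IsArgLift (circleArc c r θ₀ θ₁) φ)
    (hwind : |φ 1 - φ 0| = Real.pi) :
    |θ₁ - θ₀| = Real.pi ∧ ‖c‖ < r ∧
      circleArc c r θ₀ θ₁ 1 = -(Real.exp l : ℂ) * circleArc c r θ₀ θ₁ 0 := by
  have hel : Real.exp (-l) < 1 := by
    rw [Real.exp_lt_one_iff]; linarith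
  have hγ0 : circleArc c r θ₀ θ₁ 0 = c + (r:ℂ) * Complex.exp (Complex.I * (θ₀:ℂ)) := by
    simp [circleArc]
  have hγ1 : circleArc c r θ₀ θ₁ 1 = c + (r:ℂ) * Complex.exp (Complex.I * (θ₁:ℂ)) := by
    norm_num [circleArc]
  -- Step 1: γ(1) = -e^l γ(0)
  have e0 := hφ.2 0 ⟨le_refl 0, zero_le_one⟩
  have e1 := hφ.2 1 ⟨zero_le_one, le_refl 1⟩
  rw [h0] at e0
  rw [h1] at e1
  have hcase : φ 1 - φ 0 = Real.pi ∨ φ 1 - φ 0 = -Real.pi := abs_eq Real.pi_pos.le |>.mp hwind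
  have hexp : Complex.exp (Complex.I * (φ 1 : ℂ)) = -Complex.exp (Complex.I * (φ 0 : ℂ)) := by
    rcases hcase with h | h
    · have : (φ 1 : ℂ) = (φ 0 : ℂ) + (Real.pi : ℂ) := by
        have : φ 1 = φ 0 + Real.pi := by linarith
        exact_mod_cast congrArg (fun x : ℝ => (x : ℂ)) this
      rw [this, mul_add, Complex.exp_add, mul_comm Complex.I (Real.pi : ℂ),
        Complex.exp_pi_mul_I]
      ring
    · have : (φ 1 : ℂ) = (φ 0 : ℂ) - (Real.pi : ℂ) := by
        have : φ 1 = φ 0 - Real.pi := by linarith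
        exact_mod_cast congrArg (fun x : ℝ => (x : ℂ)) this
      rw [this, mul_sub, Complex.exp_sub, mul_comm Complex.I (Real.pi : ℂ),
        Complex.exp_pi_mul_I]
      ring
  have hQP : circleArc c r θ₀ θ₁ 1 = -(Real.exp l : ℂ) * circleArc c r θ₀ θ₁ 0 := by
    rw [e1, e0, hexp]
    have hee : (Real.exp l : ℂ) * (Real.exp (-l) : ℂ) = 1 := by
      rw [← Complex.ofReal_mul, ← Real.exp_add]
      norm_num
    calc (1:ℂ) * -Complex.exp (Complex.I * (φ 0:ℂ))
        = -((Real.exp l : ℂ) * (Real.exp (-l) : ℂ)) * Complex.exp (Complex.I * (φ 0:ℂ)) := by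
          rw [hee]; ring
      _ = -(Real.exp l : ℂ) * ((Real.exp (-l) : ℂ) * Complex.exp (Complex.I * (φ 0:ℂ))) := by
          ring
  -- Step 2: |c| < r
  have habsexp : ∀ θ : ℝ, ‖Complex.exp (Complex.I * (θ:ℂ))‖ = 1 := by
    intro θ
    rw [Complex.norm_exp]
    simp
  have hsub0 : Complex.normSq (circleArc c r θ₀ θ₁ 0 - c) = r^2 := by
    rw [hγ0]
    have : c + (r:ℂ) * Complex.exp (Complex.I * (θ₀:ℂ)) - c
        = (r:ℂ) * Complex.exp (Complex.I * (θ₀:ℂ)) := by ring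
    rw [this, ← Complex.sq_norm, norm_mul, habsexp θ₀, Complex.norm_of_nonneg hr.le]
    ring
  have hsub1 : Complex.normSq (circleArc c r θ₀ θ₁ 1 - c) = r^2 := by
    rw [hγ1]
    have : c + (r:ℂ) * Complex.exp (Complex.I * (θ₁:ℂ)) - c
        = (r:ℂ) * Complex.exp (Complex.I * (θ₁:ℂ)) := by ring
    rw [this, ← Complex.sq_norm, norm_mul, habsexp θ₁, Complex.norm_of_nonneg hr.le]
    ring
  have hmlt : ‖c‖ < r := by
    by_contra hcon
    push_neg at hcon
    have hns0 : Complex.normSq (circleArc c r θ₀ θ₁ 0) = (Real.exp (-l))^2 := by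
      rw [← Complex.sq_norm, h0]
    have hns1 : Complex.normSq (circleArc c r θ₀ θ₁ 1) = 1 := by
      rw [← Complex.sq_norm, h1]; norm_num
    have hnsc : r^2 ≤ Complex.normSq c := by
      rw [← Complex.sq_norm]
      exact pow_le_pow_left₀ hr.le hcon 2
    have key0 := Complex.normSq_sub (circleArc c r θ₀ θ₁ 0) c
    have key1 := Complex.normSq_sub (circleArc c r θ₀ θ₁ 1) c
    rw [hsub0, hns0] at key0
    rw [hsub1, hns1] at key1
    have hre : (circleArc c r θ₀ θ₁ 1 * (starRingEnd ℂ) c).re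
        = -Real.exp l * (circleArc c r θ₀ θ₁ 0 * (starRingEnd ℂ) c).re := by
      rw [hQP]
      have : -(Real.exp l : ℂ) * circleArc c r θ₀ θ₁ 0 * (starRingEnd ℂ) c
          = ((-Real.exp l : ℝ) : ℂ) * (circleArc c r θ₀ θ₁ 0 * (starRingEnd ℂ) c) := by
        push_cast; ring
      rw [this, Complex.re_ofReal_mul]
    have hp0 : 0 < (circleArc c r θ₀ θ₁ 0 * (starRingEnd ℂ) c).re := by
      nlinarith [Real.exp_pos (-l)]
    have hp1 : 0 < (circleArc c r θ₀ θ₁ 1 * (starRingEnd ℂ) c).re := by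
      nlinarith
    rw [hre] at hp1
    nlinarith [Real.exp_pos l]
  -- Step 3: |θ₁ - θ₀| = π
  refine ⟨?_, hmlt, hQP⟩
  set m := ‖c‖ with hm
  have hc0 : c ≠ 0 := by
    intro h
    rw [h] at hγ0 hγ1
    have a0 : ‖circleArc 0 r θ₀ θ₁ 0‖ = r := by
      rw [hγ0]
      simp [map_mul, habsexp θ₀, abs_of_pos hr]
    have a1 : ‖circleArc 0 r θ₀ θ₁ 1‖ = r := by
      rw [hγ1]
      simp [map_mul, habsexp θ₁, abs_of_pos hr]
    rw [h] at h0 h1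
    rw [a0] at h0
    rw [a1] at h1
    linarith
  have hm0 : 0 < m := by
    rw [hm]
    exact norm_pos_iff.mpr hc0
  set a := Complex.arg c with ha
  have hc : (m:ℂ) * Complex.exp (Complex.I * (a:ℂ)) = c := by
    rw [mul_comm Complex.I]
    exact Complex.norm_mul_exp_arg_mul_I c
  set A : ℝ → ℂ := fun ψ => (m:ℂ) + (r:ℂ) * Complex.exp (Complex.I * (ψ:ℂ)) with hA
  have hfact : ∀ θ : ℝ, c + (r:ℂ) * Complex.exp (Complex.I * (θ:ℂ))
      = Complex.exp (Complex.I * (a:ℂ)) * A (θ - a) := by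
    intro θ
    rw [hA]
    simp only
    rw [mul_add, ← hc]
    have : Complex.exp (Complex.I * (a:ℂ)) * ((r:ℂ) * Complex.exp (Complex.I * ((θ - a : ℝ):ℂ)))
        = (r:ℂ) * Complex.exp (Complex.I * (a:ℂ) + Complex.I * ((θ - a : ℝ):ℂ)) := by
      rw [Complex.exp_add]; ring
    rw [this]
    have : Complex.I * (a:ℂ) + Complex.I * ((θ - a : ℝ):ℂ) = Complex.I * (θ:ℂ) := by
      push_cast; ring
    rw [this]
    ring
  have habsA : ∀ θ : ℝ, ‖c + (r:ℂ) * Complex.exp (Complex.I * (θ:ℂ))‖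
      = ‖A (θ - a)‖ := by
    intro θ
    rw [hfact θ, norm_mul, habsexp a, one_mul]
  have habs2 : ∀ ψ : ℝ, ‖A ψ‖^2 = m^2 + r^2 + 2*m*r*Real.cos ψ := by
    intro ψ
    rw [Complex.sq_norm, hA]
    simp only
    rw [mul_comm Complex.I ((ψ:ℝ):ℂ), Complex.exp_mul_I, ← Complex.ofReal_cos,
      ← Complex.ofReal_sin]
    simp [Complex.normSq_apply, Complex.cos_ofReal_re, Complex.sin_ofReal_re]
    nlinarith [Real.sin_sq_add_cos_sq ψ]
  have hAim : ∀ ψ : ℝ, (A ψ).im = r * Real.sin ψ := by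
    intro ψ
    rw [hA]
    simp only
    rw [mul_comm Complex.I ((ψ:ℝ):ℂ), Complex.exp_mul_I, ← Complex.ofReal_cos,
      ← Complex.ofReal_sin]
    simp [Complex.sin_ofReal_re]
  set ψ₀ := θ₀ - a with hψ0
  set ψ₁ := θ₁ - a with hψ1
  set Δ := θ₁ - θ₀ with hΔ
  have hθt : ∀ t : ℝ, ((1 - t) * θ₀ + t * θ₁) - a = ψ₀ + t * Δ := by
    intro t; rw [hψ0, hΔ]; ring
  have habst : ∀ t : ℝ, ‖circleArc c r θ₀ θ₁ t‖^2
      = m^2 + r^2 + 2*m*r*Real.cos (ψ₀ + t*Δ) := by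
    intro t
    have hrfl : circleArc c r θ₀ θ₁ t
        = c + (r:ℂ) * Complex.exp (Complex.I * ((((1-t)*θ₀ + t*θ₁ : ℝ)):ℂ)) := rfl
    rw [hrfl, habsA, hθt t, habs2]
  have hs0 : m^2 + r^2 + 2*m*r*Real.cos ψ₀ = (Real.exp (-l))^2 := by
    have h := habst 0
    rw [h0] at h
    norm_num at h
    linarith
  have hs1 : m^2 + r^2 + 2*m*r*Real.cos ψ₁ = 1 := by
    have h := habst 1
    rw [h1] at h
    have heq : ψ₀ + 1*Δ = ψ₁ := by rw [hψ0, hψ1, hΔ]; ring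
    rw [heq] at h
    norm_num at h
    linarith
  have hmin : ∀ t ∈ Set.Icc (0:ℝ) 1, Real.cos ψ₀ ≤ Real.cos (ψ₀ + t * Δ) := by
    intro t ht
    have hle := (hmem t ht).1
    have hsq : (Real.exp (-l))^2 ≤ ‖circleArc c r θ₀ θ₁ t‖^2 :=
      pow_le_pow_left₀ (Real.exp_pos (-l)).le hle 2
    rw [habst t] at hsq
    nlinarith [mul_pos hm0 hr]
  have hmax : ∀ t ∈ Set.Icc (0:ℝ) 1, Real.cos (ψ₁ + t * (-Δ)) ≤ Real.cos ψ₁ := by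
    intro t ht
    have ht' : (1 - t) ∈ Set.Icc (0:ℝ) 1 := ⟨by linarith [ht.2], by linarith [ht.1]⟩
    have hle := (hmem (1-t) ht').2
    have hsq : ‖circleArc c r θ₀ θ₁ (1-t)‖^2 ≤ 1 := by
      have := pow_le_pow_left₀ (norm_nonneg (circleArc c r θ₀ θ₁ (1-t))) hle 2
      simpa using this
    rw [habst (1-t)] at hsq
    have heq : ψ₀ + (1-t)*Δ = ψ₁ + t*(-Δ) := by rw [hψ0, hψ1, hΔ]; ring
    rw [heq] at hsq
    nlinarith [mul_pos hm0 hr]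
  have hA1 : A ψ₁ = -(Real.exp l : ℂ) * A ψ₀ := by
    apply mul_left_cancel₀ (Complex.exp_ne_zero (Complex.I * (a:ℂ)))
    have e1' : Complex.exp (Complex.I * (a:ℂ)) * A ψ₁ = circleArc c r θ₀ θ₁ 1 := by
      rw [hγ1, hfact θ₁]
    have e0' : Complex.exp (Complex.I * (a:ℂ)) * A ψ₀ = circleArc c r θ₀ θ₁ 0 := by
      rw [hγ0, hfact θ₀]
    rw [e1', hQP, ← e0']
    ring
  have hsin : Real.sin ψ₁ = -Real.exp l * Real.sin ψ₀ := by
    have him := congrArg Complex.im hA1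
    rw [hAim ψ₁] at him
    have hr' : (-(Real.exp l : ℂ) * A ψ₀).im = -Real.exp l * (A ψ₀).im := by
      have : -(Real.exp l : ℂ) * A ψ₀ = ((-Real.exp l : ℝ) : ℂ) * A ψ₀ := by push_cast; ring
      rw [this, Complex.im_ofReal_mul]
    rw [hr', hAim ψ₀] at him
    have : r * Real.sin ψ₁ = r * (-Real.exp l * Real.sin ψ₀) := by rw [him]; ring
    exact mul_left_cancel₀ (ne_of_gt hr) this
  have k0 : Real.sin ψ₀ * Δ ≤ 0 := endpoint_min ψ₀ Δ hmin
  have k1 : 0 ≤ Real.sin ψ₁ * (-Δ) := endpoint_max ψ₁ (-Δ) hmax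
  have k0' : 0 ≤ Real.sin ψ₀ * Δ := by
    rw [hsin] at k1
    nlinarith [Real.exp_pos l]
  have k2 : Real.sin ψ₀ * Δ = 0 := le_antisymm k0 k0'
  have hΔne : Δ ≠ 0 := by
    intro h
    have hψeq : ψ₁ = ψ₀ := by rw [hψ0, hψ1]; rw [hΔ] at h; linarith
    rw [hψeq] at hs1
    rw [hs0] at hs1
    nlinarith [Real.exp_pos (-l)]
  have hsin0 : Real.sin ψ₀ = 0 := by
    rcases mul_eq_zero.mp k2 with h | h
    · exact h
    · exact absurd h hΔne
  have hsin1 : Real.sin ψ₁ = 0 := by rw [hsin, hsin0]; ring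
  have c0sq : Real.cos ψ₀ = 1 ∨ Real.cos ψ₀ = -1 := by
    apply mul_self_eq_one_iff.mp
    have := Real.sin_sq_add_cos_sq ψ₀
    rw [hsin0] at this
    nlinarith
  have c1sq : Real.cos ψ₁ = 1 ∨ Real.cos ψ₁ = -1 := by
    apply mul_self_eq_one_iff.mp
    have := Real.sin_sq_add_cos_sq ψ₁
    rw [hsin1] at this
    nlinarith
  have hcc : Real.cos ψ₀ < Real.cos ψ₁ := by
    have hexp2 : (Real.exp (-l))^2 < 1 := by nlinarith [Real.exp_pos (-l)]
    nlinarith [mul_pos hm0 hr]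
  have hcos0 : Real.cos ψ₀ = -1 := by
    rcases c0sq with h | h
    · exfalso
      rw [h] at hcc
      linarith [Real.cos_le_one ψ₁]
    · exact h
  have hcos1 : Real.cos ψ₁ = 1 := by
    rcases c1sq with h | h
    · exact h
    · exfalso
      rw [h] at hcc
      linarith [Real.neg_one_le_cos ψ₀]
  have hcosΔ : Real.cos Δ = -1 := by
    have hd : Δ = ψ₁ - ψ₀ := by rw [hψ0, hψ1, hΔ]; ring
    rw [hd, Real.cos_sub, hcos0, hcos1, hsin0, hsin1]
    ring
  obtain ⟨k, hk⟩ := Real.cos_eq_neg_one_iff.mp hcosΔ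
  have hb := abs_le.mp hθ
  have hπ := Real.pi_pos
  have hi1 : 2*(k:ℝ)+1 ≤ 2 := by nlinarith [hb.2, hk]
  have hi2 : (-2:ℝ) ≤ 2*(k:ℝ)+1 := by nlinarith [hb.1, hk]
  have hj1 : 2*k+1 ≤ 2 := by exact_mod_cast hi1
  have hj2 : (-2:ℤ) ≤ 2*k+1 := by exact_mod_cast hi2
  have hkb : k = 0 ∨ k = -1 := by omega
  rcases hkb with h | h
  · rw [h] at hk
    push_cast at hk
    have hΔπ : Δ = Real.pi := by linarith
    rw [hΔπ, abs_of_pos hπ]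
  · rw [h] at hk
    push_cast at hk
    have hΔπ : Δ = -Real.pi := by linarith
    rw [hΔπ, abs_neg, abs_of_pos hπ]
end
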